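/- Let P be an irreducible stochastic matrix on finite S with all entries of the tilted family well-defined, and suppose C(P, f) := sup_{θ, x, y} v_{P̃_θ}(y)/v_{P̃_θ}(x) < ∞; here v_{P̃_θ} is the positive right Perron–Frobenius eigenvector of P̃_θ(x,y) = P(x,y)e^{θf(y)}. For θ₂ ∈ ℝ let P_{θ₂} denote the corresponding Doob-transformed stochastic matrix. Then the right Perron–Frobenius eigenvector of the tilt of P_{θ₂} by θ₁ satisfies v_{(P_{θ₂})~_{θ₁}}(y)/v_{(P_{θ₂})~_{θ₁}}(x) = (v_{P̃_{θ₁+θ₂}}(y) v_{P̃_{θ₂}}(x)) / (v_{P̃_{θ₁+θ₂}}(x) v_{P̃_{θ₂}}(y)), and consequently sup_{θ₂} C(P_{θ₂}, f) ≤ C(P, f)². -/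

import Mathlib

open Finset

lemma powEntryNonneg {S : Type*} [Fintype S] [DecidableEq S]
    (A : S → S → ℝ) (hA0 : ∀ x y, 0 ≤ A x y) :
    ∀ (n : ℕ) (x y : S), 0 ≤ ((Matrix.of A) ^ n) x y := by
  intro n
  induction n with
  | zero =>
    intro x y
    simp only [pow_zero, Matrix.one_apply]
    split <;> norm_num
  | succ n ih =>
    intro x y
    rw [pow_succ, Matrix.mul_apply]
    exact Finset.sum_nonneg fun z _ => mul_nonneg (ih x z) (hA0 z y)

lemma powEntryPos {S : Type*} [Fintype S] [DecidableEq S]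
    (P A : S → S → ℝ) (hP0 : ∀ x y, 0 ≤ P x y) (hA0 : ∀ x y, 0 ≤ A x y)
    (hPA : ∀ x y, 0 < P x y → 0 < A x y) :
    ∀ (n : ℕ) (x y : S), 0 < ((Matrix.of P) ^ n) x y → 0 < ((Matrix.of A) ^ n) x y := by
  intro n
  induction n with
  | zero =>
    intro x y h
    simpa using (by simpa using h : (0:ℝ) < ((1 : Matrix S S ℝ)) x y)
  | succ n ih =>
    intro x y h
    rw [pow_succ, Matrix.mul_apply] at h
    have h' : ∑ z : S, (0:ℝ) < ∑ z, ((Matrix.of P) ^ n) x z * (Matrix.of P) z y := by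
      simpa using h
    obtain ⟨z, -, hz⟩ := Finset.exists_lt_of_sum_lt h'
    have hz1 : 0 < ((Matrix.of P) ^ n) x z ∧ 0 < (Matrix.of P) z y := by
      rcases mul_pos_iff.mp hz with h1 | h1
      · exact h1
      · exact absurd h1.2 (not_lt.mpr (hP0 z y))
    have hA1 : 0 < ((Matrix.of A) ^ n) x z := ih x z hz1.1
    have hA2 : 0 < (Matrix.of A) z y := hPA z y hz1.2
    rw [pow_succ, Matrix.mul_apply]
    have hle : ((Matrix.of A) ^ n) x z * (Matrix.of A) z y
        ≤ ∑ u, ((Matrix.of A) ^ n) x u * (Matrix.of A) u y :=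
      Finset.single_le_sum
        (fun u _ => mul_nonneg (powEntryNonneg A hA0 n x u) (hA0 u y)) (mem_univ z)
    exact lt_of_lt_of_le (mul_pos hA1 hA2) hle

lemma eigLe {S : Type*} [Fintype S] [Nonempty S]
    (A : S → S → ℝ) (hA0 : ∀ x y, 0 ≤ A x y)
    (u v : S → ℝ) (hu : ∀ x, 0 < u x) (hv : ∀ x, 0 < v x) (l m : ℝ)
    (hAu : ∀ x, ∑ y, A x y * u y = l * u x)
    (hAv : ∀ x, ∑ y, A x y * v y = m * v x) : m ≤ l := by
  obtain ⟨x0, -, hx0⟩ := Finset.exists_min_image Finset.univ (fun x => u x / v x)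
    ⟨Classical.arbitrary S, mem_univ _⟩
  set t := u x0 / v x0 with ht
  have hmin : ∀ z, t * v z ≤ u z := by
    intro z
    have h1 : t ≤ u z / v z := hx0 z (mem_univ z)
    calc t * v z ≤ (u z / v z) * v z := mul_le_mul_of_nonneg_right h1 (hv z).le
      _ = u z := div_mul_cancel₀ _ (hv z).ne'
  have htv : t * v x0 = u x0 := div_mul_cancel₀ _ (hv x0).ne'
  have h2 : t * (m * v x0) ≤ l * u x0 := by
    rw [← hAu x0, ← hAv x0, Finset.mul_sum]
    apply Finset.sum_le_sum
    intro y _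
    rw [show t * (A x0 y * v y) = A x0 y * (t * v y) by ring]
    exact mul_le_mul_of_nonneg_left (hmin y) (hA0 x0 y)
  have h3 : m * u x0 ≤ l * u x0 := by
    calc m * u x0 = t * (m * v x0) := by rw [← htv]; ring
      _ ≤ l * u x0 := h2
  exact le_of_mul_le_mul_right h3 (hu x0)

lemma propEq {S : Type*} [Fintype S] [DecidableEq S]
    (A : S → S → ℝ) (hA0 : ∀ x y, 0 ≤ A x y)
    (hirrA : ∀ x y : S, ∃ n : ℕ, 0 < ((Matrix.of A) ^ n) x y)
    (u v : S → ℝ) (hu : ∀ x, 0 < u x) (hv : ∀ x, 0 < v x) (l m : ℝ)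
    (hAu : ∀ x, ∑ y, A x y * u y = l * u x)
    (hAv : ∀ x, ∑ y, A x y * v y = m * v x) :
    ∀ x y, u y * v x = u x * v y := by
  intro x y
  have : Nonempty S := ⟨x⟩
  have hlm : l = m :=
    le_antisymm (eigLe A hA0 v u hv hu m l hAv hAu) (eigLe A hA0 u v hu hv l m hAu hAv)
  subst hlm
  obtain ⟨x0, -, hx0⟩ := Finset.exists_min_image Finset.univ (fun x => u x / v x)
    ⟨Classical.arbitrary S, mem_univ _⟩
  set t := u x0 / v x0 with ht
  have hmin : ∀ z, t * v z ≤ u z := by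
    intro z
    have h1 : t ≤ u z / v z := hx0 z (mem_univ z)
    calc t * v z ≤ (u z / v z) * v z := mul_le_mul_of_nonneg_right h1 (hv z).le
      _ = u z := div_mul_cancel₀ _ (hv z).ne'
  have htv : t * v x0 = u x0 := div_mul_cancel₀ _ (hv x0).ne'
  set d : S → ℝ := fun z => u z - t * v z with hd
  have hd0 : ∀ z, 0 ≤ d z := fun z => sub_nonneg.2 (hmin z)
  have hdx0 : d x0 = 0 := by simp [hd, htv]
  have hAd : ∀ a, ∑ z, A a z * d z = l * d a := by
    intro a
    have : ∑ z, A a z * d z = (∑ z, A a z * u z) - t * (∑ z, A a z * v z) := by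
      rw [Finset.mul_sum, ← Finset.sum_sub_distrib]
      apply Finset.sum_congr rfl
      intro z _
      simp only [hd]; ring
    rw [this, hAu a, hAv a]
    simp only [hd]; ring
  have hpow : ∀ (n : ℕ) (a : S), ∑ z, ((Matrix.of A) ^ n) a z * d z = l ^ n * d a := by
    intro n
    induction n with
    | zero =>
      intro a
      simp [Matrix.one_apply]
    | succ n ih =>
      intro a
      calc ∑ z, ((Matrix.of A) ^ (n + 1)) a z * d z
          = ∑ z, ∑ b, ((Matrix.of A) ^ n) a b * (Matrix.of A) b z * d z := by
            simp [pow_succ, Matrix.mul_apply, Finset.sum_mul]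
        _ = ∑ b, ((Matrix.of A) ^ n) a b * ∑ z, A b z * d z := by
            rw [Finset.sum_comm]
            apply Finset.sum_congr rfl
            intro b _
            rw [Finset.mul_sum]
            apply Finset.sum_congr rfl
            intro z _
            simp [Matrix.of_apply]; ring
        _ = ∑ b, ((Matrix.of A) ^ n) a b * (l * d b) := by
            apply Finset.sum_congr rfl
            intro b _
            rw [hAd b]
        _ = l * ∑ b, ((Matrix.of A) ^ n) a b * d b := by
            rw [Finset.mul_sum]
            apply Finset.sum_congr rfl
            intro b _
            ring
        _ = l ^ (n + 1) * d a := by rw [ih a]; ring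
  have hdz : ∀ z, d z = 0 := by
    intro z
    obtain ⟨n, hn⟩ := hirrA x0 z
    have h0 : ∑ b, ((Matrix.of A) ^ n) x0 b * d b = 0 := by
      rw [hpow, hdx0, mul_zero]
    have := (Finset.sum_eq_zero_iff_of_nonneg
      (fun b _ => mul_nonneg (powEntryNonneg A hA0 n x0 b) (hd0 b))).mp h0 z (mem_univ z)
    rcases mul_eq_zero.mp this with h | h
    · exact absurd h hn.ne'
    · exact h
  have hueq : ∀ z, u z = t * v z := by
    intro z
    have := hdz z
    simp only [hd] at this
    linarith
  rw [hueq x, hueq y]; ring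


/-- Tilting the Doob transform `P_{θ₂}` by `θ₁` yields right Perron–Frobenius
eigenvector ratios
`w θ₁ θ₂ y / w θ₁ θ₂ x = v (θ₁+θ₂) y * v θ₂ x / (v (θ₁+θ₂) x * v θ₂ y)`, and
consequently if `C` bounds all ratios `v θ y / v θ x`, then the eigenvector
ratios for the tilted Doob transforms are bounded by `C ^ 2`. -/
theorem stmt_19
    {S : Type*} [Fintype S] [DecidableEq S]
    (P : S → S → ℝ) (f : S → ℝ)
    (hP0 : ∀ x y, 0 ≤ P x y) (hP1 : ∀ x, ∑ y, P x y = 1)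
    (hirr : ∀ x y : S, ∃ n : ℕ, 0 < ((Matrix.of P) ^ n) x y)
    (ρ : ℝ → ℝ) (v : ℝ → S → ℝ)
    (hρ : ∀ θ, 0 < ρ θ) (hv : ∀ θ x, 0 < v θ x)
    (heig : ∀ θ x, ∑ y, P x y * Real.exp (θ * f y) * v θ y = ρ θ * v θ x)
    -- `w θ₁ θ₂` is the positive right Perron–Frobenius eigenvector (with
    -- eigenvalue `σ θ₁ θ₂`) of the tilt by `θ₁` of the Doob transform `P_{θ₂}`
    (σ : ℝ → ℝ → ℝ) (w : ℝ → ℝ → S → ℝ)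
    (hσ : ∀ θ₁ θ₂, 0 < σ θ₁ θ₂) (hw : ∀ θ₁ θ₂ x, 0 < w θ₁ θ₂ x)
    (heig2 : ∀ θ₁ θ₂ x,
      ∑ y, (P x y * Real.exp (θ₂ * f y) * v θ₂ y / (ρ θ₂ * v θ₂ x))
          * Real.exp (θ₁ * f y) * w θ₁ θ₂ y
        = σ θ₁ θ₂ * w θ₁ θ₂ x)
    (C : ℝ) (hC : ∀ (θ : ℝ) (x y : S), v θ y / v θ x ≤ C) :
    (∀ (θ₁ θ₂ : ℝ) (x y : S),
      w θ₁ θ₂ y / w θ₁ θ₂ x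
        = v (θ₁ + θ₂) y * v θ₂ x / (v (θ₁ + θ₂) x * v θ₂ y)) ∧
    (∀ (θ₁ θ₂ : ℝ) (x y : S), w θ₁ θ₂ y / w θ₁ θ₂ x ≤ C ^ 2) := by
  have main : ∀ (θ₁ θ₂ : ℝ) (x y : S),
      w θ₁ θ₂ y / w θ₁ θ₂ x
        = v (θ₁ + θ₂) y * v θ₂ x / (v (θ₁ + θ₂) x * v θ₂ y) := by
    intro θ₁ θ₂ x y
    set A : S → S → ℝ := fun a b => P a b * Real.exp ((θ₁ + θ₂) * f b) with hA
    have hA0 : ∀ a b, 0 ≤ A a b := fun a b => mul_nonneg (hP0 a b) (Real.exp_pos _).le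
    have hirrA : ∀ a b : S, ∃ n : ℕ, 0 < ((Matrix.of A) ^ n) a b := by
      intro a b
      obtain ⟨n, hn⟩ := hirr a b
      exact ⟨n, powEntryPos P A hP0 hA0
        (fun a b h => mul_pos h (Real.exp_pos _)) n a b hn⟩
    set u : S → ℝ := fun z => v θ₂ z * w θ₁ θ₂ z with hu
    have hupos : ∀ z, 0 < u z := fun z => mul_pos (hv θ₂ z) (hw θ₁ θ₂ z)
    have hAu : ∀ a, ∑ b, A a b * u b = (ρ θ₂ * σ θ₁ θ₂) * u a := by
      intro a
      have hne : (ρ θ₂ * v θ₂ a) ≠ 0 := ne_of_gt (mul_pos (hρ θ₂) (hv θ₂ a))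
      have h2 := congrArg (fun r => r * (ρ θ₂ * v θ₂ a)) (heig2 θ₁ θ₂ a)
      rw [Finset.sum_mul] at h2
      calc ∑ b, A a b * u b
          = ∑ b, (P a b * Real.exp (θ₂ * f b) * v θ₂ b / (ρ θ₂ * v θ₂ a))
              * Real.exp (θ₁ * f b) * w θ₁ θ₂ b * (ρ θ₂ * v θ₂ a) := by
            apply Finset.sum_congr rfl
            intro b _
            simp only [hA, hu]
            rw [show (θ₁ + θ₂) * f b = θ₂ * f b + θ₁ * f b by ring, Real.exp_add]
            field_simp
            field_simp [(hρ θ₂).ne', (hv θ₂ a).ne']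
        _ = σ θ₁ θ₂ * w θ₁ θ₂ a * (ρ θ₂ * v θ₂ a) := h2
        _ = (ρ θ₂ * σ θ₁ θ₂) * u a := by simp only [hu]; ring
    have hAv : ∀ a, ∑ b, A a b * v (θ₁ + θ₂) b = ρ (θ₁ + θ₂) * v (θ₁ + θ₂) a := by
      intro a
      simpa [hA, mul_assoc] using heig (θ₁ + θ₂) a
    have key := propEq A hA0 hirrA u (v (θ₁ + θ₂)) hupos (hv (θ₁ + θ₂))
      (ρ θ₂ * σ θ₁ θ₂) (ρ (θ₁ + θ₂)) hAu hAv x y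
    simp only [hu] at key
    rw [div_eq_div_iff (hw θ₁ θ₂ x).ne'
      (mul_pos (hv (θ₁ + θ₂) x) (hv θ₂ y)).ne']
    linear_combination key
  refine ⟨main, ?_⟩
  intro θ₁ θ₂ x y
  rw [main θ₁ θ₂ x y]
  have hCpos : 0 < C :=
    lt_of_lt_of_le (div_pos (hv 0 y) (hv 0 x)) (hC 0 x y)
  have h1 : v (θ₁ + θ₂) y / v (θ₁ + θ₂) x ≤ C := hC (θ₁ + θ₂) x y
  have h2 : v θ₂ x / v θ₂ y ≤ C := hC θ₂ y x
  calc v (θ₁ + θ₂) y * v θ₂ x / (v (θ₁ + θ₂) x * v θ₂ y)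
      = (v (θ₁ + θ₂) y / v (θ₁ + θ₂) x) * (v θ₂ x / v θ₂ y) := by
        rw [div_mul_div_comm]
    _ ≤ C * C := by
        apply mul_le_mul h1 h2
          (div_nonneg (hv θ₂ x).le (hv θ₂ y).le) hCpos.le
    _ = C ^ 2 := (sq C).symm
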